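/- Let π_A, π_B be probability mass functions on a finite set 𝒜 with supp(π_A) = supp(π_B), and r : 𝒜 → ℝ. If f(0) = -1 but f(0) is replaced by an arbitrary value c ≠ -1, the bias of the f-estimator equals Σ_{a: π_A(a)=0} π_B(a)·(c + 1)·r(a); in particular when π_A and π_B have common support, the f-estimator is unbiased for every bounded f. -/

import Mathlib

open Finset

/-- Bias of the single-step `f`-estimator when the value of `f` at weight `0` is
replaced by an arbitrary constant `c`: the bias relative to the true improvement
`V(π_A) - V(π_B)` equals `Σ_{a : π_A(a)=0} π_B(a)·(c+1)·r(a)`; in particular, when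
`π_A` and `π_B` have common support the `f`-estimator is unbiased for every `f`. -/
theorem stmt_5 {𝒜 : Type*} [Fintype 𝒜] (πA πB : 𝒜 → ℝ) (r : 𝒜 → ℝ) (f : ℝ → ℝ)
    (c : ℝ)
    (hA : ∀ a, 0 ≤ πA a) (hB : ∀ a, 0 ≤ πB a)
    (hAs : ∑ a, πA a = 1) (hBs : ∑ a, πB a = 1) :
    ((∑ a ∈ Finset.univ.filter (fun a => 0 < πB a),
        πB a * (if 0 < πA a then f (πA a / πB a) else c) * r a)
      + (∑ a ∈ Finset.univ.filter (fun a => 0 < πA a),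
          πA a * (1 - (πB a / πA a) * (1 + f (πA a / πB a))) * r a)
      - (∑ a, πA a * r a - ∑ a, πB a * r a)
      = ∑ a ∈ Finset.univ.filter (fun a => πA a = 0), πB a * (c + 1) * r a)
    ∧ ((∀ a, 0 < πA a ↔ 0 < πB a) →
        (∑ a ∈ Finset.univ.filter (fun a => 0 < πB a),
            πB a * (if 0 < πA a then f (πA a / πB a) else c) * r a)
          + (∑ a ∈ Finset.univ.filter (fun a => 0 < πA a),
              πA a * (1 - (πB a / πA a) * (1 + f (πA a / πB a))) * r a)
          = ∑ a, πA a * r a - ∑ a, πB a * r a) := by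
  have key : (∑ a ∈ Finset.univ.filter (fun a => 0 < πB a),
        πB a * (if 0 < πA a then f (πA a / πB a) else c) * r a)
      + (∑ a ∈ Finset.univ.filter (fun a => 0 < πA a),
          πA a * (1 - (πB a / πA a) * (1 + f (πA a / πB a))) * r a)
      - (∑ a, πA a * r a - ∑ a, πB a * r a)
      = ∑ a ∈ Finset.univ.filter (fun a => πA a = 0), πB a * (c + 1) * r a := by
    rw [Finset.sum_filter, Finset.sum_filter, Finset.sum_filter,
      ← Finset.sum_sub_distrib, ← Finset.sum_add_distrib, ← Finset.sum_sub_distrib]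
    apply Finset.sum_congr rfl
    intro a _
    rcases lt_or_eq_of_le (hA a) with hpa | hpa
    · have hane : ¬ πA a = 0 := ne_of_gt hpa
      rcases lt_or_eq_of_le (hB a) with hpb | hpb
      · rw [if_pos hpb, if_pos hpa, if_pos hpa, if_neg hane]
        field_simp
        ring
      · have hb0 : πB a = 0 := hpb.symm
        rw [if_neg (by rw [hb0]; exact lt_irrefl 0), if_pos hpa, if_neg hane, hb0]
        field_simp
        ring
    · have hpa0 : πA a = 0 := hpa.symm
      have hnA : ¬ 0 < πA a := by rw [hpa0]; exact lt_irrefl 0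
      rw [if_neg hnA, if_pos hpa0, hpa0]
      simp only [lt_irrefl, if_false]
      rcases lt_or_eq_of_le (hB a) with hpb | hpb
      · rw [if_pos hpb]
        ring
      · rw [if_neg (by rw [← hpb]; exact lt_irrefl 0), ← hpb]
        ring
  refine ⟨key, fun hsupp => ?_⟩
  have hz : ∑ a ∈ Finset.univ.filter (fun a => πA a = 0), πB a * (c + 1) * r a = 0 := by
    apply Finset.sum_eq_zero
    intro a ha
    have hpa : πA a = 0 := (Finset.mem_filter.mp ha).2
    have : ¬ 0 < πB a := fun h => by
      have := (hsupp a).mpr h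
      rw [hpa] at this
      exact lt_irrefl 0 this
    have : πB a = 0 := le_antisymm (not_lt.mp this) (hB a)
    rw [this]; ring
  rw [hz] at key
  linarith
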